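/- Let Z be a zonotope in R^d that is the Minkowski sum of n pairwise non-collinear line segments. Then the diameter of the graph of Z (vertices and edges) equals n. -/

import Mathlib

open Filter Pointwise

def IsPrimitive {d : ℕ} (x : Fin d → ℤ) : Prop :=
  x ≠ 0 ∧ Finset.univ.gcd x = 1

def FirstNonzeroPos {d : ℕ} (x : Fin d → ℤ) : Prop :=
  ∃ i, 0 < x i ∧ ∀ j, j < i → x j = 0

def norm1 {d : ℕ} (x : Fin d → ℤ) : ℕ := ∑ i, (x i).natAbs

noncomputable def zetaR (d : ℕ) : ℝ := ∑' n : ℕ, (1 : ℝ) / (n + 1) ^ d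

noncomputable def primCount (d p : ℕ) : ℕ :=
  Nat.card {x : Fin d → ℤ // IsPrimitive x ∧ norm1 x ≤ p ∧ FirstNonzeroPos x}

noncomputable def zonotope {d : ℕ} (G : Finset (Fin d → ℝ)) : Set (Fin d → ℝ) :=
  ∑ g ∈ G, segment ℝ 0 g

noncomputable def polytopeGraph {d : ℕ} (P : Set (Fin d → ℝ)) :
    SimpleGraph (Set.extremePoints ℝ P) where
  Adj u v := u ≠ v ∧ IsExtreme ℝ P (segment ℝ u.1 v.1)
  symm := by
    constructor
    intro u v h
    exact ⟨Ne.symm h.1, by rw [segment_symm]; exact h.2⟩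
  loopless := by constructor; intro u h; exact h.1 rfl

noncomputable def graphDiam {d : ℕ} (P : Set (Fin d → ℝ)) : ℕ :=
  sSup {n | ∃ u v, (polytopeGraph P).dist u v = n}

noncomputable def cube (d k : ℕ) : Set (Fin d → ℝ) :=
  {x | ∀ i, 0 ≤ x i ∧ x i ≤ k}

noncomputable def kOf {d : ℕ} (P : Set (Fin d → ℝ)) : ℕ :=
  sInf {k | ∃ t : Fin d → ℤ, ((fun i => (t i : ℝ)) +ᵥ P) ⊆ cube d k}

noncomputable def H1 (d p : ℕ) : Set (Fin d → ℝ) :=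
  ∑ᶠ x ∈ {x : Fin d → ℤ | IsPrimitive x ∧ norm1 x ≤ p ∧ FirstNonzeroPos x},
    segment ℝ 0 (fun i => (x i : ℝ))
set_option maxHeartbeats 1000000

open Matrix Finset

variable {d : ℕ}

lemma mem_segment_zero {g x : Fin d → ℝ} :
    x ∈ segment ℝ 0 g ↔ ∃ t ∈ Set.Icc (0:ℝ) 1, t • g = x := by
  rw [segment_eq_image]
  simp

lemma mem_zonotope_iff {G : Finset (Fin d → ℝ)} {x : Fin d → ℝ} :
    x ∈ zonotope G ↔ ∃ t : (Fin d → ℝ) → ℝ,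
      (∀ g ∈ G, t g ∈ Set.Icc (0:ℝ) 1) ∧ x = ∑ g ∈ G, t g • g := by
  classical
  unfold zonotope
  induction G using Finset.induction_on generalizing x with
  | empty =>
      simp only [Finset.sum_empty]
      constructor
      · intro hx
        exact ⟨fun _ => 0, by simp, by simpa using hx⟩
      · rintro ⟨t, -, rfl⟩
        simp
  | @insert a s ha ih =>
      rw [Finset.sum_insert ha]
      constructor
      · intro hx
        rw [Set.mem_add] at hx
        obtain ⟨y, hy, z, hz, hyz⟩ := hx
        obtain ⟨ta, hta, rfl⟩ := mem_segment_zero.1 hy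
        obtain ⟨t, ht, rfl⟩ := ih.1 hz
        refine ⟨Function.update t a ta, ?_, ?_⟩
        · intro g hg
          rcases Finset.mem_insert.1 hg with rfl | hg
          · simpa using hta
          · rw [Function.update_of_ne (fun h : g = a => ha (h ▸ hg))]
            exact ht g hg
        · rw [Finset.sum_insert ha, Function.update_self, ← hyz]
          congr 1
          exact Finset.sum_congr rfl fun g hg => by
            rw [Function.update_of_ne (fun h : g = a => ha (h ▸ hg))]
      · rintro ⟨t, ht, rfl⟩
        rw [Finset.sum_insert ha, Set.mem_add]
        exact ⟨t a • a, mem_segment_zero.2 ⟨t a, ht a (Finset.mem_insert_self a s), rfl⟩,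
          ∑ g ∈ s, t g • g, ih.2 ⟨t, fun g hg => ht g (Finset.mem_insert_of_mem hg), rfl⟩,
          rfl⟩

lemma convex_zonotope (G : Finset (Fin d → ℝ)) : Convex ℝ (zonotope G) := by
  classical
  unfold zonotope
  induction G using Finset.induction_on with
  | empty => rw [Finset.sum_empty]; exact convex_singleton (𝕜 := ℝ) (0 : Fin d → ℝ)
  | @insert a s ha ih =>
      rw [Finset.sum_insert ha]
      exact (convex_segment _ _).add ih

lemma vsum_mem_zonotope {G S : Finset (Fin d → ℝ)} (hS : S ⊆ G) :
    (∑ g ∈ S, g) ∈ zonotope G := by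
  classical
  refine mem_zonotope_iff.2 ⟨fun g => if g ∈ S then 1 else 0, ?_, ?_⟩
  · intro g _; by_cases h : g ∈ S <;> simp [h]
  · simp only [ite_smul, one_smul, zero_smul]
    rw [Finset.sum_ite_mem]
    rw [Finset.inter_eq_right.2 hS]

lemma dot_finset_sum {ι : Type*} (c : Fin d → ℝ) (s : Finset ι) (f : ι → Fin d → ℝ) :
    c ⬝ᵥ (∑ i ∈ s, f i) = ∑ i ∈ s, c ⬝ᵥ f i := by
  classical
  induction s using Finset.induction_on with
  | empty => simp [dotProduct]
  | @insert a s ha ih => rw [Finset.sum_insert ha, dotProduct_add, ih, Finset.sum_insert ha]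

-- pattern of a functional
noncomputable def pat (c : Fin d → ℝ) (G : Finset (Fin d → ℝ)) : Finset (Fin d → ℝ) :=
  G.filter (fun g => 0 < c ⬝ᵥ g)

def ZStrict (c : Fin d → ℝ) (G : Finset (Fin d → ℝ)) : Prop := ∀ g ∈ G, c ⬝ᵥ g ≠ 0

lemma pat_subset {c : Fin d → ℝ} {G : Finset (Fin d → ℝ)} : pat c G ⊆ G := Finset.filter_subset _ _

/-- key inequality: for strict c, the vertex v_{pat c G} maximizes c over coefficient sums,
with equality forcing the coefficients. -/
lemma dot_le_vert {c : Fin d → ℝ} {G : Finset (Fin d → ℝ)} (hc : ZStrict c G)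
    (t : (Fin d → ℝ) → ℝ) (ht : ∀ g ∈ G, t g ∈ Set.Icc (0:ℝ) 1) :
    c ⬝ᵥ (∑ g ∈ G, t g • g) ≤ c ⬝ᵥ (∑ g ∈ pat c G, g) ∧
    (c ⬝ᵥ (∑ g ∈ G, t g • g) = c ⬝ᵥ (∑ g ∈ pat c G, g) →
      ∀ g ∈ G, t g = if g ∈ pat c G then 1 else 0) := by
  classical
  rw [dot_finset_sum, dot_finset_sum]
  simp only [dotProduct_smul, smul_eq_mul]
  have hrw : ∑ g ∈ pat c G, c ⬝ᵥ g = ∑ g ∈ G, (if g ∈ pat c G then (1:ℝ) else 0) * (c ⬝ᵥ g) := by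
    simp only [ite_mul, one_mul, zero_mul]
    rw [Finset.sum_ite_mem, Finset.inter_eq_right.2 pat_subset]
  rw [hrw]
  have hterm : ∀ g ∈ G, t g * (c ⬝ᵥ g) ≤ (if g ∈ pat c G then (1:ℝ) else 0) * (c ⬝ᵥ g) := by
    intro g hg
    obtain ⟨h0, h1⟩ := ht g hg
    by_cases hp : g ∈ pat c G
    · have : 0 < c ⬝ᵥ g := (Finset.mem_filter.1 hp).2
      simp only [hp, if_true, one_mul]
      nlinarith
    · have hne := hc g hg
      have hneg : c ⬝ᵥ g < 0 := by
        rcases lt_or_gt_of_ne hne with h | h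
        · exact h
        · exact absurd (Finset.mem_filter.2 ⟨hg, h⟩) hp
      simp only [hp, if_false, zero_mul]
      nlinarith
  refine ⟨Finset.sum_le_sum hterm, ?_⟩
  intro heq g hg
  by_contra hne
  have hstrict : t g * (c ⬝ᵥ g) < (if g ∈ pat c G then (1:ℝ) else 0) * (c ⬝ᵥ g) := by
    obtain ⟨h0, h1⟩ := ht g hg
    rcases lt_or_eq_of_le (hterm g hg) with h | h
    · exact h
    · exfalso; apply hne
      by_cases hp : g ∈ pat c G
      · have hpos : 0 < c ⬝ᵥ g := (Finset.mem_filter.1 hp).2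
        simp only [hp, if_true, one_mul] at h ⊢
        have := mul_right_cancel₀ (ne_of_gt hpos) (h.trans (one_mul _).symm)
        simpa using this
      · have hneg : c ⬝ᵥ g ≠ 0 := hc g hg
        simp only [hp, if_false, zero_mul] at h ⊢
        rcases mul_eq_zero.1 h with h' | h'
        · exact h'
        · exact absurd h' hneg
  have := Finset.sum_lt_sum (fun i hi => hterm i hi) ⟨g, hg, hstrict⟩
  exact absurd heq (ne_of_lt this)

lemma sum_indicator {G S : Finset (Fin d → ℝ)} (hS : S ⊆ G) :
    ∑ g ∈ G, (if g ∈ S then (1:ℝ) else 0) • g = ∑ g ∈ S, g := by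
  classical
  simp only [ite_smul, one_smul, zero_smul]
  rw [Finset.sum_ite_mem, Finset.inter_eq_right.2 hS]

lemma dot_le_max {c : Fin d → ℝ} {G : Finset (Fin d → ℝ)} (hc : ZStrict c G)
    {x : Fin d → ℝ} (hx : x ∈ zonotope G) :
    c ⬝ᵥ x ≤ c ⬝ᵥ (∑ g ∈ pat c G, g) := by
  obtain ⟨t, ht, rfl⟩ := mem_zonotope_iff.1 hx
  exact (dot_le_vert hc t ht).1

lemma eq_vert_of_dot_eq {c : Fin d → ℝ} {G : Finset (Fin d → ℝ)} (hc : ZStrict c G)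
    {x : Fin d → ℝ} (hx : x ∈ zonotope G)
    (heq : c ⬝ᵥ x = c ⬝ᵥ (∑ g ∈ pat c G, g)) : x = ∑ g ∈ pat c G, g := by
  obtain ⟨t, ht, rfl⟩ := mem_zonotope_iff.1 hx
  have h2 := (dot_le_vert hc t ht).2 heq
  rw [← sum_indicator (pat_subset (c := c) (G := G))]
  exact Finset.sum_congr rfl fun g hg => by rw [h2 g hg]

lemma pat_unique {c : Fin d → ℝ} {G T : Finset (Fin d → ℝ)} (hc : ZStrict c G)
    (hT : T ⊆ G) (heq : (∑ g ∈ T, g) = ∑ g ∈ pat c G, g) : T = pat c G := by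
  classical
  have ht : ∀ g ∈ G, (if g ∈ T then (1:ℝ) else 0) ∈ Set.Icc (0:ℝ) 1 := by
    intro g _; by_cases h : g ∈ T <;> simp [h]
  have hsum : (∑ g ∈ G, (if g ∈ T then (1:ℝ) else 0) • g) = ∑ g ∈ pat c G, g := by
    rw [sum_indicator hT]; exact heq
  have h2 := (dot_le_vert hc _ ht).2 (by rw [hsum])
  ext g
  constructor
  · intro hg
    have hgG := hT hg
    have := h2 g hgG
    simp only [hg, if_true] at this
    by_contra hp
    simp only [hp, if_false] at this
    norm_num at this
  · intro hg
    have hgG := pat_subset hg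
    have := h2 g hgG
    simp only [hg, if_true] at this
    by_contra hp
    simp only [hp, if_false] at this
    norm_num at this

lemma vert_extreme {c : Fin d → ℝ} {G : Finset (Fin d → ℝ)} (hc : ZStrict c G) :
    (∑ g ∈ pat c G, g) ∈ Set.extremePoints ℝ (zonotope G) := by
  rw [mem_extremePoints]
  refine ⟨vsum_mem_zonotope pat_subset, ?_⟩
  intro x₁ h₁ x₂ h₂ hseg
  obtain ⟨a, b, ha, hb, hab, hsum⟩ := hseg
  set M := c ⬝ᵥ (∑ g ∈ pat c G, g) with hM
  have e1 : c ⬝ᵥ x₁ ≤ M := dot_le_max hc h₁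
  have e2 : c ⬝ᵥ x₂ ≤ M := dot_le_max hc h₂
  have hdot : a * (c ⬝ᵥ x₁) + b * (c ⬝ᵥ x₂) = M := by
    rw [hM, ← hsum, dotProduct_add, dotProduct_smul, dotProduct_smul]
    rfl
  have hM' : a * M + b * M = M := by rw [← add_mul, hab, one_mul]
  have hx1 : c ⬝ᵥ x₁ = M := by
    by_contra h
    have hlt : c ⬝ᵥ x₁ < M := lt_of_le_of_ne e1 h
    have h1 := mul_lt_mul_of_pos_left hlt ha
    have h2 := mul_le_mul_of_nonneg_left e2 hb.le
    linarith
  have hx2 : c ⬝ᵥ x₂ = M := by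
    by_contra h
    have hlt : c ⬝ᵥ x₂ < M := lt_of_le_of_ne e2 h
    have h1 := mul_lt_mul_of_pos_left hlt hb
    have h2 := mul_le_mul_of_nonneg_left e1 ha.le
    linarith
  exact ⟨eq_vert_of_dot_eq hc h₁ hx1, eq_vert_of_dot_eq hc h₂ hx2⟩

/-- Part (a): an extreme point is a subset sum. -/
lemma extreme_subset_sum {G : Finset (Fin d → ℝ)} (h0 : (0 : Fin d → ℝ) ∉ G)
    {x : Fin d → ℝ} (hx : x ∈ Set.extremePoints ℝ (zonotope G)) :
    ∃ S ⊆ G, x = ∑ g ∈ S, g := by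
  classical
  obtain ⟨hxZ, hext⟩ := mem_extremePoints.1 hx
  obtain ⟨t, ht, rfl⟩ := mem_zonotope_iff.1 hxZ
  set x := ∑ g ∈ G, t g • g with hxdef
  -- show each t g ∈ {0,1}
  have key : ∀ g ∈ G, t g = 0 ∨ t g = 1 := by
    intro g0 hg0
    by_contra hcon
    push_neg at hcon
    obtain ⟨hne0, hne1⟩ := hcon
    obtain ⟨h0le, h1le⟩ := ht g0 hg0
    have hpos : 0 < t g0 := lt_of_le_of_ne h0le (Ne.symm hne0)
    have hlt1 : t g0 < 1 := lt_of_le_of_ne h1le hne1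
    set ε : ℝ := min (t g0) (1 - t g0) with hε
    have hεpos : 0 < ε := lt_min hpos (by linarith)
    have hε1 : ε ≤ t g0 := min_le_left _ _
    have hε2 : ε ≤ 1 - t g0 := min_le_right _ _
    have hmem : ∀ s : ℝ, 0 ≤ t g0 + s → t g0 + s ≤ 1 →
        x + s • g0 ∈ zonotope G := by
      intro s hs0 hs1
      refine mem_zonotope_iff.2 ⟨Function.update t g0 (t g0 + s), ?_, ?_⟩
      · intro g hg
        by_cases h : g = g0
        · subst h; rw [Function.update_self]; exact ⟨hs0, hs1⟩
        · rw [Function.update_of_ne h]; exact ht g hg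
      · rw [← Finset.add_sum_erase _ _ hg0, Function.update_self]
        have herase : ∑ g ∈ G.erase g0, Function.update t g0 (t g0 + s) g • g
            = ∑ g ∈ G.erase g0, t g • g := by
          refine Finset.sum_congr rfl fun g hg => ?_
          rw [Function.update_of_ne (Finset.ne_of_mem_erase hg)]
        rw [herase, hxdef, ← Finset.add_sum_erase _ _ hg0]
        module
    have h1 : x + (-ε) • g0 ∈ zonotope G := hmem (-ε) (by linarith) (by linarith)
    have h2 : x + ε • g0 ∈ zonotope G := hmem ε (by linarith) (by linarith)
    have hseg : x ∈ openSegment ℝ (x + (-ε) • g0) (x + ε • g0) := by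
      refine ⟨1/2, 1/2, by norm_num, by norm_num, by norm_num, ?_⟩
      module
    obtain ⟨he, -⟩ := hext _ h1 _ h2 hseg
    have : (-ε) • g0 = 0 := by
      have := congrArg (· - x) he
      simpa [add_sub_cancel_left] using this
    rcases smul_eq_zero.1 this with h | h
    · exact absurd (neg_eq_zero.1 h) (ne_of_gt hεpos)
    · exact h0 (h ▸ hg0)
  refine ⟨G.filter (fun g => t g = 1), Finset.filter_subset _ _, ?_⟩
  rw [hxdef]
  rw [Finset.sum_filter]
  refine Finset.sum_congr rfl fun g hg => ?_
  rcases key g hg with h | h <;> simp [h]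

/-- Part (b): Gordan — a subset sum that is extreme admits a strict functional. -/
lemma extreme_rep {G : Finset (Fin d → ℝ)} (h0 : (0 : Fin d → ℝ) ∉ G)
    {x : Fin d → ℝ} (hx : x ∈ Set.extremePoints ℝ (zonotope G)) :
    ∃ c : Fin d → ℝ, ZStrict c G ∧ x = ∑ g ∈ pat c G, g := by
  classical
  obtain ⟨S, hS, rfl⟩ := extreme_subset_sum h0 hx
  obtain ⟨hxZ, hext⟩ := mem_extremePoints.1 hx
  set x := ∑ g ∈ S, g with hxdef
  set D : Finset (Fin d → ℝ) := (G \ S) ∪ S.image (fun g => -g) with hD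
  -- elements of D are nonzero and x + d ∈ Z
  have hDmem : ∀ d' ∈ D, d' ≠ 0 ∧ x + d' ∈ zonotope G := by
    intro d' hd'
    rcases Finset.mem_union.1 hd' with h | h
    · obtain ⟨hG, hnS⟩ := Finset.mem_sdiff.1 h
      refine ⟨fun he => h0 (he ▸ hG), ?_⟩
      have : x + d' = ∑ g ∈ insert d' S, g := by
        rw [Finset.sum_insert hnS, hxdef]; abel
      rw [this]
      exact vsum_mem_zonotope (Finset.insert_subset hG hS)
    · obtain ⟨g, hgS, rfl⟩ := Finset.mem_image.1 h
      refine ⟨fun he => h0 (by simpa using (neg_eq_zero.1 he) ▸ hS hgS), ?_⟩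
      have : x + -g = ∑ g' ∈ S.erase g, g' := by
        rw [hxdef, ← Finset.add_sum_erase _ _ hgS]; abel
      rw [this]
      exact vsum_mem_zonotope ((Finset.erase_subset _ _).trans hS)
  -- 0 is not in the convex hull of D
  have h0D : (0 : Fin d → ℝ) ∉ convexHull ℝ (↑D : Set (Fin d → ℝ)) := by
    intro hmem
    obtain ⟨w, hw0, hw1, hwc⟩ := Finset.mem_convexHull.1 hmem
    rw [Finset.centerMass_eq_of_sum_1 _ _ hw1] at hwc
    simp only [id] at hwc
    obtain ⟨d0, hd0D, hd0pos⟩ : ∃ d0 ∈ D, 0 < w d0 := by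
      by_contra hcon
      push_neg at hcon
      have : ∑ y ∈ D, w y = 0 :=
        Finset.sum_eq_zero fun y hy => le_antisymm (hcon y hy) (hw0 y hy)
      rw [hw1] at this; norm_num at this
    set lam := w d0 with hlam
    have hlam1 : lam ≤ 1 := by
      rw [← hw1]
      exact Finset.single_le_sum hw0 hd0D
    rcases eq_or_lt_of_le hlam1 with hl1 | hl1
    · -- lam = 1 : all other weights zero, so d0 = 0
      have hrest : ∀ y ∈ D.erase d0, w y = 0 := by
        intro y hy
        have hsum : w d0 + ∑ y ∈ D.erase d0, w y = 1 := by
          rw [Finset.add_sum_erase _ _ hd0D, hw1]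
        have hnn : 0 ≤ ∑ y ∈ D.erase d0, w y :=
          Finset.sum_nonneg fun z hz => hw0 z (Finset.mem_of_mem_erase hz)
        have : ∑ y ∈ D.erase d0, w y = 0 := by rw [← hl1] at hsum; linarith
        exact (Finset.sum_eq_zero_iff_of_nonneg
          (fun z hz => hw0 z (Finset.mem_of_mem_erase hz))).1 this y hy
      have : d0 = 0 := by
        have h1 : ∑ y ∈ D, w y • y = w d0 • d0 + ∑ y ∈ D.erase d0, w y • y :=
          (Finset.add_sum_erase _ _ hd0D).symm
        have h2 : ∑ y ∈ D.erase d0, w y • y = 0 :=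
          Finset.sum_eq_zero fun y hy => by rw [hrest y hy, zero_smul]
        have hw' : w d0 = 1 := hlam ▸ hl1
        rw [h1, h2, add_zero, hw', one_smul] at hwc
        exact hwc
      exact (hDmem d0 hd0D).1 this
    · -- 0 < lam < 1 : x is in the open segment between x + d0 and y
      set y : Fin d → ℝ := (1 - lam)⁻¹ • ∑ d' ∈ D.erase d0, w d' • (x + d') with hy
      have h1lam : (0:ℝ) < 1 - lam := by linarith
      have hyZ : y ∈ zonotope G := by
        rw [hy]
        have hsum' : ∑ d' ∈ D.erase d0, ((1 - lam)⁻¹ * w d') = 1 := by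
          rw [← Finset.mul_sum]
          have : ∑ d' ∈ D.erase d0, w d' = 1 - lam := by
            have := Finset.add_sum_erase _ w hd0D
            rw [hw1] at this; linarith
          rw [this, inv_mul_cancel₀ (ne_of_gt h1lam)]
        have := Convex.sum_mem (convex_zonotope G)
          (t := D.erase d0) (w := fun d' => (1 - lam)⁻¹ * w d')
          (z := fun d' => x + d')
          (fun i hi => mul_nonneg (inv_nonneg.2 h1lam.le) (hw0 i (Finset.mem_of_mem_erase hi)))
          hsum' (fun i hi => (hDmem i (Finset.mem_of_mem_erase hi)).2)
        rw [Finset.smul_sum]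
        simp only [smul_smul]
        exact this
      have hxseg : x ∈ openSegment ℝ (x + d0) y := by
        refine ⟨lam, 1 - lam, hd0pos, h1lam, by ring, ?_⟩
        rw [hy, smul_inv_smul₀ (ne_of_gt h1lam)]
        have hsplit : ∑ d' ∈ D.erase d0, w d' • (x + d')
            = (∑ d' ∈ D.erase d0, w d') • x + ∑ d' ∈ D.erase d0, w d' • d' := by
          rw [Finset.sum_smul]
          rw [← Finset.sum_add_distrib]
          exact Finset.sum_congr rfl fun d' _ => smul_add _ _ _
        have hwsum : ∑ d' ∈ D.erase d0, w d' = 1 - lam := by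
          have := Finset.add_sum_erase _ w hd0D
          rw [hw1] at this; linarith
        have hdsum : ∑ d' ∈ D.erase d0, w d' • d' = - (lam • d0) := by
          have h3 := Finset.add_sum_erase _ (fun y => w y • y) hd0D
          rw [hwc] at h3
          rw [hlam, eq_neg_iff_add_eq_zero, add_comm]
          exact h3
        rw [hsplit, hwsum, hdsum]
        module
      obtain ⟨he, -⟩ := hext _ (hDmem d0 hd0D).2 _ hyZ hxseg
      have : d0 = 0 := by
        have := congrArg (· - x) he
        simpa using this
      exact (hDmem d0 hd0D).1 this
  -- separate 0 from the hull
  have hKconv : Convex ℝ (convexHull ℝ (↑D : Set (Fin d → ℝ))) := convex_convexHull _ _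
  have hKcl : IsClosed (convexHull ℝ (↑D : Set (Fin d → ℝ))) :=
    (D.finite_toSet.isCompact_convexHull ℝ).isClosed
  obtain ⟨f, u, hfu, hu0⟩ := geometric_hahn_banach_closed_point hKconv hKcl h0D
  rw [map_zero] at hu0
  have hfd : ∀ d' ∈ D, f d' < 0 := fun d' hd' =>
    (hfu d' (subset_convexHull ℝ _ (Finset.mem_coe.2 hd'))).trans hu0
  set c : Fin d → ℝ := fun i => f (fun j => if i = j then 1 else 0) with hc
  have hdot : ∀ v : Fin d → ℝ, c ⬝ᵥ v = f v := by
    intro v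
    have h := LinearMap.pi_apply_eq_sum_univ (↑f : (Fin d → ℝ) →ₗ[ℝ] ℝ) v
    simp only [ContinuousLinearMap.coe_coe] at h
    rw [h, dotProduct]
    exact Finset.sum_congr rfl fun i _ => by rw [smul_eq_mul, mul_comm]
  have hpos : ∀ g ∈ S, 0 < c ⬝ᵥ g := by
    intro g hg
    have : -g ∈ D := Finset.mem_union_right _ (Finset.mem_image.2 ⟨g, hg, rfl⟩)
    have := hfd _ this
    rw [map_neg] at this
    rw [hdot]; linarith
  have hneg : ∀ g ∈ G, g ∉ S → c ⬝ᵥ g < 0 := by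
    intro g hg hgS
    have : g ∈ D := Finset.mem_union_left _ (Finset.mem_sdiff.2 ⟨hg, hgS⟩)
    rw [hdot]; exact hfd _ this
  have hstrict : ZStrict c G := by
    intro g hg
    by_cases h : g ∈ S
    · exact ne_of_gt (hpos g h)
    · exact ne_of_lt (hneg g hg h)
  have hpat : pat c G = S := by
    ext g
    rw [pat, Finset.mem_filter]
    constructor
    · rintro ⟨hg, hlt⟩
      by_contra h
      exact absurd hlt (not_lt.2 (hneg g hg h).le)
    · intro h
      exact ⟨hS h, hpos g h⟩
  exact ⟨c, hstrict, by rw [hpat]⟩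

lemma sum_split2 {G : Finset (Fin d → ℝ)} {g1 g2 : Fin d → ℝ} (hg1 : g1 ∈ G) (hg2 : g2 ∈ G)
    (hne : g1 ≠ g2) (s : (Fin d → ℝ) → ℝ) :
    ∑ g ∈ G, s g • g = s g1 • g1 + (s g2 • g2 + ∑ g ∈ (G.erase g1).erase g2, s g • g) := by
  rw [← Finset.add_sum_erase _ _ hg1,
    ← Finset.add_sum_erase _ _ (Finset.mem_erase.2 ⟨hne.symm, hg2⟩)]

lemma adjust2_mem {G : Finset (Fin d → ℝ)} {g1 g2 : Fin d → ℝ} (hg1 : g1 ∈ G) (hg2 : g2 ∈ G)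
    (hne : g1 ≠ g2) {t : (Fin d → ℝ) → ℝ} (ht : ∀ g ∈ G, t g ∈ Set.Icc (0:ℝ) 1)
    {a b : ℝ} (ha : a ∈ Set.Icc (0:ℝ) 1) (hb : b ∈ Set.Icc (0:ℝ) 1) :
    (∑ g ∈ G, t g • g) + (a - t g1) • g1 + (b - t g2) • g2 ∈ zonotope G := by
  classical
  set t' := Function.update (Function.update t g1 a) g2 b with ht'
  have ht'g1 : t' g1 = a := by
    rw [ht', Function.update_of_ne hne, Function.update_self]
  have ht'g2 : t' g2 = b := by rw [ht', Function.update_self]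
  have ht'other : ∀ g, g ≠ g1 → g ≠ g2 → t' g = t g := by
    intro g h1 h2
    rw [ht', Function.update_of_ne h2, Function.update_of_ne h1]
  refine mem_zonotope_iff.2 ⟨t', ?_, ?_⟩
  · intro g hg
    by_cases h1 : g = g1
    · subst h1; rw [ht'g1]; exact ha
    by_cases h2 : g = g2
    · subst h2; rw [ht'g2]; exact hb
    · rw [ht'other g h1 h2]; exact ht g hg
  · rw [sum_split2 hg1 hg2 hne t', sum_split2 hg1 hg2 hne t, ht'g1, ht'g2]
    have : ∑ g ∈ (G.erase g1).erase g2, t' g • g = ∑ g ∈ (G.erase g1).erase g2, t g • g :=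
      Finset.sum_congr rfl fun g hg => by
        rw [ht'other g (Finset.ne_of_mem_erase (Finset.mem_of_mem_erase hg))
          (Finset.ne_of_mem_erase hg)]
    rw [this]
    module

/-- adjacency implies the sign patterns differ in at most one generator -/
lemma adj_card_le {G S T : Finset (Fin d → ℝ)} (h0 : (0 : Fin d → ℝ) ∉ G)
    (hnc : (G : Set (Fin d → ℝ)).Pairwise fun g g' => ∀ c : ℝ, g' ≠ c • g)
    (hS : S ⊆ G) (hT : T ⊆ G)
    (hext : IsExtreme ℝ (zonotope G) (segment ℝ (∑ g ∈ S, g) (∑ g ∈ T, g))) :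
    (symmDiff S T).card ≤ 1 := by
  classical
  by_contra hcard
  push_neg at hcard
  obtain ⟨g1, hg1, g2, hg2, hne⟩ := Finset.one_lt_card.1 hcard
  set u := ∑ g ∈ S, g with hu
  set v := ∑ g ∈ T, g with hv
  have hsdG : ∀ g ∈ symmDiff S T, g ∈ G := by
    intro g hg
    rcases Finset.mem_symmDiff.1 hg with ⟨h, -⟩ | ⟨h, -⟩
    exacts [hS h, hT h]
  have hg1G := hsdG g1 hg1
  have hg2G := hsdG g2 hg2
  set tm : (Fin d → ℝ) → ℝ :=
    fun g => ((if g ∈ S then (1:ℝ) else 0) + (if g ∈ T then (1:ℝ) else 0)) / 2 with htm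
  have htm01 : ∀ g ∈ G, tm g ∈ Set.Icc (0:ℝ) 1 := by
    intro g _
    by_cases h1 : g ∈ S <;> by_cases h2 : g ∈ T <;> simp [htm, h1, h2] <;> norm_num
  have htmhalf : ∀ g ∈ symmDiff S T, tm g = 1/2 := by
    intro g hg
    rcases Finset.mem_symmDiff.1 hg with ⟨h1, h2⟩ | ⟨h1, h2⟩ <;> simp [htm, h1, h2]
  set m : Fin d → ℝ := ∑ g ∈ G, tm g • g with hm
  have hmuv : m = (1/2 : ℝ) • (u + v) := by
    rw [hm, hu, hv, ← sum_indicator hS, ← sum_indicator hT, ← Finset.sum_add_distrib,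
      Finset.smul_sum]
    refine Finset.sum_congr rfl fun g _ => ?_
    rw [htm]
    module
  have hmseg : m ∈ segment ℝ u v := ⟨1/2, 1/2, by norm_num, by norm_num, by norm_num,
    by rw [hmuv]; module⟩
  -- the four perturbed points
  have tm1 := htmhalf g1 hg1
  have tm2 := htmhalf g2 hg2
  have hIcc0 : (0:ℝ) ∈ Set.Icc (0:ℝ) 1 := by norm_num
  have hIcc1 : (1:ℝ) ∈ Set.Icc (0:ℝ) 1 := by norm_num
  have hp1 : m + (1/2 : ℝ) • (g1 - g2) ∈ zonotope G := by
    have := adjust2_mem hg1G hg2G hne htm01 hIcc1 hIcc0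
    rw [← hm, tm1, tm2] at this
    convert this using 1
    module
  have hp2 : m - (1/2 : ℝ) • (g1 - g2) ∈ zonotope G := by
    have := adjust2_mem hg1G hg2G hne htm01 hIcc0 hIcc1
    rw [← hm, tm1, tm2] at this
    convert this using 1
    module
  have hp3 : m + (1/2 : ℝ) • (g1 + g2) ∈ zonotope G := by
    have := adjust2_mem hg1G hg2G hne htm01 hIcc1 hIcc1
    rw [← hm, tm1, tm2] at this
    convert this using 1
    module
  have hp4 : m - (1/2 : ℝ) • (g1 + g2) ∈ zonotope G := by
    have := adjust2_mem hg1G hg2G hne htm01 hIcc0 hIcc0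
    rw [← hm, tm1, tm2] at this
    convert this using 1
    module
  -- extreme segment absorbs both pairs
  have habs : ∀ w : Fin d → ℝ, m + w ∈ zonotope G → m - w ∈ zonotope G →
      m + w ∈ segment ℝ u v := by
    intro w hw1 hw2
    have hmid : m ∈ openSegment ℝ (m + w) (m - w) :=
      ⟨1/2, 1/2, by norm_num, by norm_num, by norm_num, by module⟩
    exact hext.2 hw1 hw2 hmseg hmid
  have hs1 := habs _ hp1 hp2
  have hs2 := habs _ hp3 hp4
  -- points of the segment lie on the line through u, v
  have hline : ∀ z ∈ segment ℝ u v, ∃ θ : ℝ, z - m = (θ - 1/2) • (v - u) := by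
    intro z hz
    rw [segment_eq_image] at hz
    obtain ⟨θ, -, rfl⟩ := hz
    exact ⟨θ, by rw [hmuv]; module⟩
  obtain ⟨θ1, hθ1⟩ := hline _ hs1
  obtain ⟨θ2, hθ2⟩ := hline _ hs2
  rw [add_sub_cancel_left] at hθ1 hθ2
  -- conclude collinearity of g1 and g2 with v - u
  have hgg1 : g1 = ((θ1 - 1/2) + (θ2 - 1/2)) • (v - u) := by
    have : (1/2 : ℝ) • (g1 - g2) + (1/2 : ℝ) • (g1 + g2) = g1 := by module
    rw [← this, hθ1, hθ2]; module
  have hgg2 : g2 = ((θ2 - 1/2) - (θ1 - 1/2)) • (v - u) := by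
    have : (1/2 : ℝ) • (g1 + g2) - (1/2 : ℝ) • (g1 - g2) = g2 := by module
    rw [← this, hθ1, hθ2]; module
  set α := (θ1 - 1/2) + (θ2 - 1/2) with hα
  set β := (θ2 - 1/2) - (θ1 - 1/2) with hβ
  have hg1ne : g1 ≠ 0 := fun h => h0 (h ▸ hg1G)
  have hαne : α ≠ 0 := by
    intro h
    rw [h, zero_smul] at hgg1
    exact hg1ne hgg1
  have : g2 = (β / α) • g1 := by
    rw [hgg1, hgg2, smul_smul]
    congr 1
    field_simp
  exact hnc hg1G hg2G hne (β / α) this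

lemma pat_not_mem {G : Finset (Fin d → ℝ)} {w g0 : Fin d → ℝ} (hw0 : w ⬝ᵥ g0 = 0) :
    g0 ∉ pat w G := fun h => by
  have := (Finset.mem_filter.1 h).2
  rw [hw0] at this
  exact lt_irrefl 0 this

lemma flip_face {G : Finset (Fin d → ℝ)} {g0 : Fin d → ℝ} (hg0 : g0 ∈ G)
    {w : Fin d → ℝ} (hw0 : w ⬝ᵥ g0 = 0) (hw : ∀ g ∈ G, g ≠ g0 → w ⬝ᵥ g ≠ 0) :
    IsExtreme ℝ (zonotope G) (segment ℝ (∑ g ∈ pat w G, g) ((∑ g ∈ pat w G, g) + g0)) := by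
  classical
  set A := pat w G with hA
  set a := ∑ g ∈ A, g with ha
  set b := a + g0 with hb
  have hg0A : g0 ∉ A := pat_not_mem hw0
  have haZ : a ∈ zonotope G := vsum_mem_zonotope pat_subset
  have hbZ : b ∈ zonotope G := by
    have : b = ∑ g ∈ insert g0 A, g := by rw [Finset.sum_insert hg0A, hb, ha]; abel
    rw [this]
    exact vsum_mem_zonotope (Finset.insert_subset hg0 pat_subset)
  set M := w ⬝ᵥ a with hM
  -- upper bound and equality case
  have hub : ∀ z ∈ zonotope G, w ⬝ᵥ z ≤ M ∧ (w ⬝ᵥ z = M → z ∈ segment ℝ a b) := by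
    intro z hz
    obtain ⟨t, ht, rfl⟩ := mem_zonotope_iff.1 hz
    have hMsum : M = ∑ g ∈ G, (if g ∈ A then (1:ℝ) else 0) * (w ⬝ᵥ g) := by
      rw [hM, ha, dot_finset_sum]
      simp only [ite_mul, one_mul, zero_mul]
      rw [Finset.sum_ite_mem, Finset.inter_eq_right.2 pat_subset]
    have hdz : w ⬝ᵥ (∑ g ∈ G, t g • g) = ∑ g ∈ G, t g * (w ⬝ᵥ g) := by
      rw [dot_finset_sum]
      exact Finset.sum_congr rfl fun g _ => by rw [dotProduct_smul]; rfl
    have hterm : ∀ g ∈ G, t g * (w ⬝ᵥ g) ≤ (if g ∈ A then (1:ℝ) else 0) * (w ⬝ᵥ g) := by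
      intro g hg
      obtain ⟨h0', h1'⟩ := ht g hg
      by_cases hgA : g ∈ A
      · have hpos : 0 < w ⬝ᵥ g := (Finset.mem_filter.1 hgA).2
        simp only [hgA, if_true, one_mul]
        nlinarith
      · simp only [hgA, if_false, zero_mul]
        by_cases hgg0 : g = g0
        · subst hgg0; rw [hw0, mul_zero]
        · have hneg : w ⬝ᵥ g < 0 := by
            rcases lt_or_gt_of_ne (hw g hg hgg0) with h | h
            · exact h
            · exact absurd (Finset.mem_filter.2 ⟨hg, h⟩) hgA
          nlinarith
    constructor
    · rw [hdz, hMsum]; exact Finset.sum_le_sum hterm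
    · intro heq
      -- termwise equality
      have heqterm : ∀ g ∈ G, t g * (w ⬝ᵥ g) = (if g ∈ A then (1:ℝ) else 0) * (w ⬝ᵥ g) := by
        intro g hg
        by_contra hne
        have hstrict : t g * (w ⬝ᵥ g) < (if g ∈ A then (1:ℝ) else 0) * (w ⬝ᵥ g) :=
          lt_of_le_of_ne (hterm g hg) hne
        have := Finset.sum_lt_sum hterm ⟨g, hg, hstrict⟩
        rw [← hdz, ← hMsum] at this
        exact absurd heq (ne_of_lt this)
      have hcoef : ∀ g ∈ G, g ≠ g0 → t g = if g ∈ A then (1:ℝ) else 0 := by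
        intro g hg hgg0
        have := heqterm g hg
        exact mul_right_cancel₀ (hw g hg hgg0) this
      -- z = a + t g0 • g0
      have hzeq : ∑ g ∈ G, t g • g = a + t g0 • g0 := by
        rw [← Finset.add_sum_erase _ _ hg0]
        have h1 : ∑ g ∈ G.erase g0, t g • g
            = ∑ g ∈ G.erase g0, (if g ∈ A then (1:ℝ) else 0) • g := by
          refine Finset.sum_congr rfl fun g hg => ?_
          rw [hcoef g (Finset.mem_of_mem_erase hg) (Finset.ne_of_mem_erase hg)]
        have h2 : ∑ g ∈ G.erase g0, (if g ∈ A then (1:ℝ) else 0) • g = ∑ g ∈ A, g := by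
          have hAsub : A ⊆ G.erase g0 := fun g hg =>
            Finset.mem_erase.2 ⟨fun h => hg0A (h ▸ hg), pat_subset hg⟩
          exact sum_indicator hAsub
        rw [h1, h2, ← ha]
        abel
      rw [hzeq]
      rw [segment_eq_image]
      exact ⟨t g0, ht g0 hg0, by rw [hb]; module⟩
  constructor
  · exact (convex_zonotope G).segment_subset haZ hbZ
  · intro x₁ h₁ x₂ h₂ x hx hseg
    -- w ⬝ᵥ x = M since x ∈ segment a b
    have hxM : w ⬝ᵥ x = M := by
      rw [segment_eq_image] at hx
      obtain ⟨θ, -, rfl⟩ := hx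
      show w ⬝ᵥ ((1 - θ) • a + θ • b) = M
      rw [hb]
      have : (1 - θ) • a + θ • (a + g0) = a + θ • g0 := by module
      rw [this, dotProduct_add, dotProduct_smul, hw0, hM]
      simp
    obtain ⟨p, q, hp, hq, hpq, hsum⟩ := hseg
    have e1 := (hub x₁ h₁).1
    have e2 := (hub x₂ h₂).1
    have hdot : p * (w ⬝ᵥ x₁) + q * (w ⬝ᵥ x₂) = M := by
      rw [← hxM, ← hsum, dotProduct_add, dotProduct_smul, dotProduct_smul]
      rfl
    have hM' : p * M + q * M = M := by rw [← add_mul, hpq, one_mul]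
    have hx1 : w ⬝ᵥ x₁ = M := by
      by_contra h
      have hlt : w ⬝ᵥ x₁ < M := lt_of_le_of_ne e1 h
      have u1 := mul_lt_mul_of_pos_left hlt hp
      have u2 := mul_le_mul_of_nonneg_left e2 hq.le
      linarith
    have hx2 : w ⬝ᵥ x₂ = M := by
      by_contra h
      have hlt : w ⬝ᵥ x₂ < M := lt_of_le_of_ne e2 h
      have u1 := mul_lt_mul_of_pos_left hlt hq
      have u2 := mul_le_mul_of_nonneg_left e1 hp.le
      linarith
    exact (hub x₁ h₁).2 hx1

lemma continuous_dot (w : Fin d → ℝ) : Continuous (fun c : Fin d → ℝ => w ⬝ᵥ c) := by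
  unfold dotProduct
  exact continuous_finset_sum _ fun i _ => (continuous_const.mul (continuous_apply i))

lemma dense_dot_ne {w : Fin d → ℝ} (hw : w ≠ 0) : Dense {c : Fin d → ℝ | w ⬝ᵥ c ≠ 0} := by
  rw [Metric.dense_iff]
  intro c ε hε
  by_cases h : w ⬝ᵥ c ≠ 0
  · exact ⟨c, Metric.mem_ball_self hε, h⟩
  · push_neg at h
    have hww : (0:ℝ) < w ⬝ᵥ w := by
      rcases (dotProduct_self_eq_zero (v := w)).not.2 hw with h'
      have : 0 ≤ w ⬝ᵥ w := Finset.sum_nonneg fun i _ => mul_self_nonneg _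
      exact lt_of_le_of_ne this (Ne.symm h')
    have hwn : 0 < ‖w‖ := norm_pos_iff.2 hw
    set δ := ε / (2 * ‖w‖) with hδ
    have hδpos : 0 < δ := div_pos hε (by positivity)
    refine ⟨c + δ • w, ?_, ?_⟩
    · rw [Metric.mem_ball, dist_eq_norm]
      have : c + δ • w - c = δ • w := by abel
      rw [this, norm_smul]
      rw [Real.norm_eq_abs, abs_of_pos hδpos, hδ]
      rw [div_mul_eq_mul_div]
      rw [div_lt_iff₀ (by positivity)]
      nlinarith
    · simp only [Set.mem_setOf_eq, dotProduct_add, h, dotProduct_smul, zero_add]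
      intro hcon
      rcases smul_eq_zero.1 hcon with h' | h'
      · exact absurd h' (ne_of_gt hδpos)
      · exact absurd h' (ne_of_gt hww)

lemma exists_generic (W : Finset (Fin d → ℝ)) (hW : ∀ w ∈ W, w ≠ 0)
    {U : Set (Fin d → ℝ)} (hU : IsOpen U) {c₀ : Fin d → ℝ} (hc₀ : c₀ ∈ U) :
    ∃ c ∈ U, ∀ w ∈ W, w ⬝ᵥ c ≠ 0 := by
  classical
  have key : IsOpen {c : Fin d → ℝ | ∀ w ∈ W, w ⬝ᵥ c ≠ 0} ∧
      Dense {c : Fin d → ℝ | ∀ w ∈ W, w ⬝ᵥ c ≠ 0} := by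
    induction W using Finset.induction_on with
    | empty => simpa using ⟨isOpen_univ, dense_univ⟩
    | @insert w W hwW ih =>
        have hw : w ≠ 0 := hW w (Finset.mem_insert_self w W)
        have ihW := ih (fun w' hw' => hW w' (Finset.mem_insert_of_mem hw'))
        have hset : {c : Fin d → ℝ | ∀ w' ∈ insert w W, w' ⬝ᵥ c ≠ 0}
            = {c : Fin d → ℝ | w ⬝ᵥ c ≠ 0} ∩ {c : Fin d → ℝ | ∀ w' ∈ W, w' ⬝ᵥ c ≠ 0} := by
          ext c
          simp [Finset.forall_mem_insert]
        rw [hset]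
        have hopen1 : IsOpen {c : Fin d → ℝ | w ⬝ᵥ c ≠ 0} := by
          have : {c : Fin d → ℝ | w ⬝ᵥ c ≠ 0} = ((fun c => w ⬝ᵥ c) ⁻¹' {0})ᶜ := by
            ext c; simp
          rw [this]
          exact (isClosed_singleton.preimage (continuous_dot w)).isOpen_compl
        exact ⟨hopen1.inter ihW.1,
          (dense_dot_ne hw).inter_of_isOpen_left ihW.2 hopen1⟩
  obtain ⟨c, hcD, hcU⟩ := key.2.exists_mem_open hU ⟨c₀, hc₀⟩
  exact ⟨c, hcU, hcD⟩

/-- subset representations of extreme points are unique -/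
lemma rep_unique {G : Finset (Fin d → ℝ)} (h0 : (0 : Fin d → ℝ) ∉ G)
    {x : Fin d → ℝ} (hx : x ∈ Set.extremePoints ℝ (zonotope G))
    {S T : Finset (Fin d → ℝ)} (hS : S ⊆ G) (hT : T ⊆ G)
    (heqS : x = ∑ g ∈ S, g) (heqT : x = ∑ g ∈ T, g) : S = T := by
  obtain ⟨c, hc, hrep⟩ := extreme_rep h0 hx
  rw [pat_unique hc hS (heqS ▸ hrep), pat_unique hc hT (heqT ▸ hrep)]

lemma walk_lower {G : Finset (Fin d → ℝ)} (h0 : (0 : Fin d → ℝ) ∉ G)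
    (hnc : (G : Set (Fin d → ℝ)).Pairwise fun g g' => ∀ c : ℝ, g' ≠ c • g)
    {u v : Set.extremePoints ℝ (zonotope G)}
    (p : (polytopeGraph (zonotope G)).Walk u v)
    {S T : Finset (Fin d → ℝ)} (hS : S ⊆ G) (hT : T ⊆ G)
    (hu : u.1 = ∑ g ∈ S, g) (hv : v.1 = ∑ g ∈ T, g) :
    (symmDiff S T).card ≤ p.length := by
  classical
  induction p generalizing S T with
  | nil =>
      rename_i w
      have : S = T := rep_unique h0 w.2 hS hT hu hv
      rw [this]
      simp
  | @cons a b c hadj p ih =>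
      obtain ⟨cb, hcb, hrep⟩ := extreme_rep h0 b.2
      have h1 : (symmDiff S (pat cb G)).card ≤ 1 := by
        refine adj_card_le h0 hnc hS pat_subset ?_
        have := hadj.2
        rwa [hu, hrep] at this
      have h2 : (symmDiff (pat cb G) T).card ≤ p.length := ih pat_subset hT hrep hv
      have htri : symmDiff S T ⊆ (symmDiff S (pat cb G)) ∪ (symmDiff (pat cb G) T) := by
        intro g hg
        have := symmDiff_triangle S (pat cb G) T
        exact this hg
      calc (symmDiff S T).card ≤ ((symmDiff S (pat cb G)) ∪ (symmDiff (pat cb G) T)).card :=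
            Finset.card_le_card htri
        _ ≤ (symmDiff S (pat cb G)).card + (symmDiff (pat cb G) T).card :=
            Finset.card_union_le _ _
        _ ≤ 1 + p.length := add_le_add h1 h2
        _ = (SimpleGraph.Walk.cons hadj p).length := by
            rw [SimpleGraph.Walk.length_cons]; ring

lemma lin_dot (c c' g : Fin d → ℝ) (t : ℝ) :
    ((1-t) • c + t • c') ⬝ᵥ g = (1-t) * (c ⬝ᵥ g) + t * (c' ⬝ᵥ g) := by
  rw [add_dotProduct, smul_dotProduct, smul_dotProduct]; rfl

lemma mem_pat_iff {c g : Fin d → ℝ} {G : Finset (Fin d → ℝ)} :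
    g ∈ pat c G ↔ g ∈ G ∧ 0 < c ⬝ᵥ g := Finset.mem_filter

/-- Main path construction. -/
lemma path_upper {G : Finset (Fin d → ℝ)} (h0 : (0 : Fin d → ℝ) ∉ G) :
    ∀ k : ℕ, ∀ c c' : Fin d → ℝ, ∀ hc : ZStrict c G, ∀ hc' : ZStrict c' G,
    (∀ g1 ∈ G, ∀ g2 ∈ G, g1 ≠ g2 → (c ⬝ᵥ g1) * (c' ⬝ᵥ g2) ≠ (c ⬝ᵥ g2) * (c' ⬝ᵥ g1)) →
    (symmDiff (pat c G) (pat c' G)).card = k →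
    ∃ p : (polytopeGraph (zonotope G)).Walk
      ⟨∑ g ∈ pat c G, g, vert_extreme hc⟩ ⟨∑ g ∈ pat c' G, g, vert_extreme hc'⟩,
      p.length ≤ k := by
  classical
  intro k
  induction k using Nat.strong_induction_on with
  | _ k ih =>
  intro c c' hc hc' hdet hcard
  set S := pat c G with hSdef
  set T := pat c' G with hTdef
  by_cases hST : S = T
  · -- same vertex
    have hv : (⟨∑ g ∈ S, g, vert_extreme hc⟩ :
        Set.extremePoints ℝ (zonotope G)) = ⟨∑ g ∈ T, g, vert_extreme hc'⟩ := by
      apply Subtype.ext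
      simp only
      rw [hST]
    exact ⟨(SimpleGraph.Walk.nil).copy rfl hv, by simp⟩
  -- nontrivial case
  have hEne : (symmDiff S T).Nonempty := by
    rw [Finset.nonempty_iff_ne_empty]
    intro h
    exact hST (symmDiff_eq_bot.1 h)
  set E := symmDiff S T with hEdef
  have hEsub : ∀ g ∈ E, g ∈ G := by
    intro g hg
    rcases Finset.mem_symmDiff.1 hg with ⟨h, -⟩ | ⟨h, -⟩
    exacts [pat_subset h, pat_subset h]
  have hSmem : ∀ g ∈ G, (0 < c ⬝ᵥ g ↔ g ∈ S) := fun g hg =>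
    ⟨fun h => mem_pat_iff.2 ⟨hg, h⟩, fun h => (mem_pat_iff.1 h).2⟩
  have hTmem : ∀ g ∈ G, (0 < c' ⬝ᵥ g ↔ g ∈ T) := fun g hg =>
    ⟨fun h => mem_pat_iff.2 ⟨hg, h⟩, fun h => (mem_pat_iff.1 h).2⟩
  -- opposite signs on E
  have hEsigns : ∀ g ∈ E, ((0 < c ⬝ᵥ g ∧ c' ⬝ᵥ g < 0) ∨ (c ⬝ᵥ g < 0 ∧ 0 < c' ⬝ᵥ g)) := by
    intro g hg
    have hgG := hEsub g hg
    rcases Finset.mem_symmDiff.1 hg with ⟨h1, h2⟩ | ⟨h1, h2⟩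
    · left
      refine ⟨(hSmem g hgG).2 h1, ?_⟩
      rcases lt_or_gt_of_ne (hc' g hgG) with h | h
      · exact h
      · exact absurd ((hTmem g hgG).1 h) h2
    · right
      refine ⟨?_, (hTmem g hgG).2 h1⟩
      rcases lt_or_gt_of_ne (hc g hgG) with h | h
      · exact h
      · exact absurd ((hSmem g hgG).1 h) h2
  -- same signs off E
  have hsame : ∀ g ∈ G, g ∉ E → ((0 < c ⬝ᵥ g ∧ 0 < c' ⬝ᵥ g) ∨ (c ⬝ᵥ g < 0 ∧ c' ⬝ᵥ g < 0)) := by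
    intro g hg hgE
    rw [hEdef, Finset.mem_symmDiff] at hgE
    push_neg at hgE
    by_cases h1 : g ∈ S
    · left
      refine ⟨(hSmem g hg).2 h1, (hTmem g hg).2 (hgE.1 h1)⟩
    · right
      have h2 : g ∉ T := fun h => h1 (hgE.2 h)
      constructor
      · rcases lt_or_gt_of_ne (hc g hg) with h | h
        · exact h
        · exact absurd ((hSmem g hg).1 h) h1
      · rcases lt_or_gt_of_ne (hc' g hg) with h | h
        · exact h
        · exact absurd ((hTmem g hg).1 h) h2
  -- crossing times
  set tg : (Fin d → ℝ) → ℝ := fun g => (c ⬝ᵥ g) / ((c ⬝ᵥ g) - (c' ⬝ᵥ g)) with htg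
  have hdenom : ∀ g ∈ E, (c ⬝ᵥ g) - (c' ⬝ᵥ g) ≠ 0 := by
    intro g hg
    rcases hEsigns g hg with ⟨h1, h2⟩ | ⟨h1, h2⟩ <;> intro h <;> nlinarith
  have hmul : ∀ g ∈ E, tg g * ((c ⬝ᵥ g) - (c' ⬝ᵥ g)) = c ⬝ᵥ g := by
    intro g hg
    rw [htg]
    exact div_mul_cancel₀ _ (hdenom g hg)
  have htg01 : ∀ g ∈ E, 0 < tg g ∧ tg g < 1 := by
    intro g hg
    have hm := hmul g hg
    rcases hEsigns g hg with ⟨h1, h2⟩ | ⟨h1, h2⟩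
    · constructor
      · by_contra hle; push_neg at hle; nlinarith
      · by_contra hle; push_neg at hle; nlinarith
    · constructor
      · by_contra hle; push_neg at hle; nlinarith
      · by_contra hle; push_neg at hle; nlinarith
  have hEsign : ∀ g ∈ E, ∀ t : ℝ, ((1-t) • c + t • c') ⬝ᵥ g
      = ((c ⬝ᵥ g) - (c' ⬝ᵥ g)) * (tg g - t) := by
    intro g hg t
    rw [lin_dot]
    linear_combination (-1 : ℝ) * hmul g hg
  -- minimizer
  obtain ⟨g0, hg0E, hg0min⟩ := Finset.exists_min_image E tg hEne
  have hg0G := hEsub g0 hg0E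
  set ts := tg g0 with hts
  have hts01 := htg01 g0 hg0E
  have hstrictmin : ∀ g ∈ E, g ≠ g0 → ts < tg g := by
    intro g hg hne
    rcases lt_or_eq_of_le (hg0min g hg) with h | h
    · exact h
    · exfalso
      have hgG := hEsub g hg
      apply hdet g0 hg0G g hgG (Ne.symm hne)
      have hm0 : tg g * ((c ⬝ᵥ g0) - (c' ⬝ᵥ g0)) = c ⬝ᵥ g0 := by
        rw [← h]; exact hmul g0 hg0E
      have hmg := hmul g hg
      have key : (tg g - 1) * ((c ⬝ᵥ g0) * (c' ⬝ᵥ g) - (c ⬝ᵥ g) * (c' ⬝ᵥ g0)) = 0 := by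
        linear_combination (c' ⬝ᵥ g) * hm0 - (c' ⬝ᵥ g0) * hmg
      rcases mul_eq_zero.1 key with hk | hk
      · have := (htg01 g hg).2; linarith [hk]
      · exact sub_eq_zero.1 hk
  -- the supporting functional at time ts
  set w : Fin d → ℝ := (1-ts) • c + ts • c' with hwdef
  have hw0 : w ⬝ᵥ g0 = 0 := by
    rw [hwdef, hEsign g0 hg0E ts]
    simp [hts]
  -- general sign lemma along the segment of functionals
  have hlin_sign : ∀ t : ℝ, 0 < t → t < 1 → (∀ g ∈ E, g ≠ g0 → t < tg g) →
      ∀ g ∈ G, g ≠ g0 → (0 < ((1-t) • c + t • c') ⬝ᵥ g ↔ g ∈ S) ∧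
        ((1-t) • c + t • c') ⬝ᵥ g ≠ 0 := by
    intro t ht0 ht1 htlt g hg hne
    by_cases hgE : g ∈ E
    · have h1 : t < tg g := htlt g hgE hne
      rw [hEsign g hgE t]
      rcases hEsigns g hgE with ⟨hp, hq⟩ | ⟨hp, hq⟩
      · have hD : 0 < (c ⬝ᵥ g) - (c' ⬝ᵥ g) := by linarith
        have hpos : 0 < ((c ⬝ᵥ g) - (c' ⬝ᵥ g)) * (tg g - t) := by nlinarith
        exact ⟨⟨fun _ => (hSmem g hg).1 hp, fun _ => hpos⟩, ne_of_gt hpos⟩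
      · have hD : (c ⬝ᵥ g) - (c' ⬝ᵥ g) < 0 := by linarith
        have hneg : ((c ⬝ᵥ g) - (c' ⬝ᵥ g)) * (tg g - t) < 0 := by nlinarith
        refine ⟨⟨fun hcon => absurd hcon (not_lt.2 hneg.le), fun hgS => ?_⟩, ne_of_lt hneg⟩
        exfalso
        have := (hSmem g hg).2 hgS
        linarith
    · rw [lin_dot]
      rcases hsame g hg hgE with ⟨hp, hq⟩ | ⟨hp, hq⟩
      · have hpos : 0 < (1-t) * (c ⬝ᵥ g) + t * (c' ⬝ᵥ g) := by nlinarith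
        exact ⟨⟨fun _ => (hSmem g hg).1 hp, fun _ => hpos⟩, ne_of_gt hpos⟩
      · have hneg : (1-t) * (c ⬝ᵥ g) + t * (c' ⬝ᵥ g) < 0 := by nlinarith
        refine ⟨⟨fun hcon => absurd hcon (not_lt.2 hneg.le), fun hgS => ?_⟩, ne_of_lt hneg⟩
        exfalso
        have := (hSmem g hg).2 hgS
        linarith
  have hwsign : ∀ g ∈ G, g ≠ g0 → (0 < w ⬝ᵥ g ↔ g ∈ S) ∧ w ⬝ᵥ g ≠ 0 := by
    rw [hwdef]
    exact hlin_sign ts hts01.1 hts01.2 (fun g hg hgne => hstrictmin g hg hgne)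
  have hwne : ∀ g ∈ G, g ≠ g0 → w ⬝ᵥ g ≠ 0 := fun g hg hne => (hwsign g hg hne).2
  -- the edge face
  have hface := flip_face hg0G hw0 hwne
  have hApat : pat w G = S.erase g0 := by
    ext g
    rw [mem_pat_iff, Finset.mem_erase]
    constructor
    · rintro ⟨hgG, hpos⟩
      have hne : g ≠ g0 := fun h => by rw [h, hw0] at hpos; exact lt_irrefl 0 hpos
      exact ⟨hne, ((hwsign g hgG hne).1).1 hpos⟩
    · rintro ⟨hne, hgS⟩
      have hgG := pat_subset hgS
      exact ⟨hgG, ((hwsign g hgG hne).1).2 hgS⟩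
  -- choose the next time s
  obtain ⟨u', hu'1, hu'2, hu'3⟩ : ∃ u' : ℝ, ts < u' ∧ u' ≤ 1 ∧ ∀ g ∈ E, g ≠ g0 → u' ≤ tg g := by
    by_cases hne : (E.erase g0).Nonempty
    · obtain ⟨g1, hg1, hmin⟩ := Finset.exists_min_image (E.erase g0) tg hne
      have hg1E := Finset.mem_of_mem_erase hg1
      exact ⟨tg g1, hstrictmin g1 hg1E (Finset.ne_of_mem_erase hg1), (htg01 g1 hg1E).2.le,
        fun g hg hgne => hmin g (Finset.mem_erase.2 ⟨hgne, hg⟩)⟩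
    · exact ⟨1, hts01.2, le_refl 1,
        fun g hg hgne => absurd (Finset.mem_erase.2 ⟨hgne, hg⟩) (fun h => hne ⟨g, h⟩)⟩
  set s : ℝ := (ts + u') / 2 with hsdef
  have hs1 : ts < s := by rw [hsdef]; linarith
  have hs2 : s < u' := by rw [hsdef]; linarith
  have hs0 : 0 < s := lt_trans hts01.1 hs1
  have hslt1 : s < 1 := lt_of_lt_of_le hs2 hu'2
  set c'' : Fin d → ℝ := (1-s) • c + s • c' with hc''def
  have hsign'' : ∀ g ∈ G, g ≠ g0 → (0 < c'' ⬝ᵥ g ↔ g ∈ S) ∧ c'' ⬝ᵥ g ≠ 0 := by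
    rw [hc''def]
    exact hlin_sign s hs0 hslt1 (fun g hg hgne => lt_of_lt_of_le hs2 (hu'3 g hg hgne))
  have hg0'' : (0 < c'' ⬝ᵥ g0 ↔ g0 ∉ S) ∧ c'' ⬝ᵥ g0 ≠ 0 := by
    rw [hc''def, hEsign g0 hg0E s]
    rcases hEsigns g0 hg0E with ⟨hp, hq⟩ | ⟨hp, hq⟩
    · have hD : 0 < (c ⬝ᵥ g0) - (c' ⬝ᵥ g0) := by linarith
      have hneg : ((c ⬝ᵥ g0) - (c' ⬝ᵥ g0)) * (tg g0 - s) < 0 := by nlinarith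
      refine ⟨⟨fun hcon => absurd hcon (not_lt.2 hneg.le), fun hgS => ?_⟩, ne_of_lt hneg⟩
      exact absurd ((hSmem g0 hg0G).1 hp) hgS
    · have hD : (c ⬝ᵥ g0) - (c' ⬝ᵥ g0) < 0 := by linarith
      have hpos : 0 < ((c ⬝ᵥ g0) - (c' ⬝ᵥ g0)) * (tg g0 - s) := by nlinarith
      refine ⟨⟨fun _ => fun hgS => ?_, fun _ => hpos⟩, ne_of_gt hpos⟩
      have := (hSmem g0 hg0G).2 hgS
      linarith
  have hc'' : ZStrict c'' G := by
    intro g hg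
    by_cases hgg : g = g0
    · subst hgg; exact hg0''.2
    · exact (hsign'' g hg hgg).2
  set S' := symmDiff S {g0} with hS'def
  have hpat'' : pat c'' G = S' := by
    ext g
    rw [mem_pat_iff, hS'def, Finset.mem_symmDiff, Finset.mem_singleton]
    by_cases hgg : g = g0
    · subst hgg
      constructor
      · rintro ⟨hgG, hpos⟩
        exact Or.inr ⟨rfl, hg0''.1.1 hpos⟩
      · rintro (⟨hgS, hcon⟩ | ⟨-, hgS⟩)
        · exact absurd rfl hcon
        · exact ⟨hg0G, hg0''.1.2 hgS⟩
    · constructor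
      · rintro ⟨hgG, hpos⟩
        exact Or.inl ⟨(hsign'' g hgG hgg).1.1 hpos, hgg⟩
      · rintro (⟨hgS, -⟩ | ⟨hcon, -⟩)
        · have hgG := pat_subset (hSdef ▸ hgS)
          exact ⟨hgG, (hsign'' g hgG hgg).1.2 hgS⟩
        · exact absurd hcon hgg
  have hdet'' : ∀ g1 ∈ G, ∀ g2 ∈ G, g1 ≠ g2 →
      (c'' ⬝ᵥ g1) * (c' ⬝ᵥ g2) ≠ (c'' ⬝ᵥ g2) * (c' ⬝ᵥ g1) := by
    intro g1 hg1 g2 hg2 hne12 hcon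
    apply hdet g1 hg1 g2 hg2 hne12
    rw [hc''def, lin_dot, lin_dot] at hcon
    have key : (1-s) * ((c ⬝ᵥ g1) * (c' ⬝ᵥ g2) - (c ⬝ᵥ g2) * (c' ⬝ᵥ g1)) = 0 := by
      linear_combination hcon
    rcases mul_eq_zero.1 key with hk | hk
    · exfalso; linarith
    · exact sub_eq_zero.1 hk
  -- cardinality drop
  have hg0ST := Finset.mem_symmDiff.1 hg0E
  have hsdE : symmDiff E {g0} = E.erase g0 := by
    ext g
    rw [Finset.mem_symmDiff, Finset.mem_erase, Finset.mem_singleton]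
    constructor
    · rintro (⟨hgE, hne⟩ | ⟨heq, hns⟩)
      · exact ⟨hne, hgE⟩
      · exact absurd (heq ▸ hg0E) hns
    · rintro ⟨hne, hgE⟩
      exact Or.inl ⟨hgE, hne⟩
  have hSd : symmDiff S' T = E.erase g0 := by
    rw [hS'def, hEdef, ← hsdE, symmDiff_assoc, symmDiff_comm {g0} T, ← symmDiff_assoc]
  have hk1 : 1 ≤ k := by
    rw [← hcard]
    exact Finset.card_pos.2 hEne
  have hcard' : (symmDiff (pat c'' G) (pat c' G)).card = k - 1 := by
    rw [hpat'', ← hTdef, hSd, Finset.card_erase_of_mem hg0E, hcard]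
  obtain ⟨p, hp⟩ := ih (k-1) (by omega) c'' c' hc'' hc' hdet'' hcard'
  -- the edge from v_S to v_{S'}
  have hface := flip_face hg0G hw0 hwne
  rw [hApat] at hface
  -- identify endpoints
  by_cases hg0S : g0 ∈ S
  · -- S' = S.erase g0 ; edge from  vS' to vS
    have hS'eq : S' = S.erase g0 := by
      ext g
      rw [hS'def, Finset.mem_symmDiff, Finset.mem_erase, Finset.mem_singleton]
      constructor
      · rintro (⟨hgS, hne⟩ | ⟨heq, hns⟩)
        · exact ⟨hne, hgS⟩
        · exact absurd (heq ▸ hg0S) hns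
      · rintro ⟨hne, hgS⟩
        exact Or.inl ⟨hgS, hne⟩
    have hsum : (∑ g ∈ S.erase g0, g) + g0 = ∑ g ∈ S, g :=
      Finset.sum_erase_add S (fun g => g) hg0S
    have hne : (∑ g ∈ S, g) ≠ ∑ g ∈ S', g := by
      intro h
      have h2 : (∑ g ∈ S.erase g0, g) + g0 = (∑ g ∈ S.erase g0, g) + 0 := by
        rw [add_zero, hsum, h, hS'eq]
      exact h0 ((add_left_cancel h2) ▸ hg0G)
    have hadj : (polytopeGraph (zonotope G)).Adj
        ⟨∑ g ∈ pat c G, g, vert_extreme hc⟩ ⟨∑ g ∈ pat c'' G, g, vert_extreme hc''⟩ := by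
      constructor
      · intro hcon
        apply hne
        have := congrArg Subtype.val hcon
        simpa [hSdef, hpat''] using this
      · show IsExtreme ℝ (zonotope G) (segment ℝ (∑ g ∈ pat c G, g) (∑ g ∈ pat c'' G, g))
        rw [hpat'', ← hSdef, hS'eq, ← hsum, segment_symm]
        exact hface
    refine ⟨SimpleGraph.Walk.cons hadj p, ?_⟩
    rw [SimpleGraph.Walk.length_cons]
    omega
  · -- S' = insert g0 S ; edge from vS to vS + g0
    have hS'eq : S' = insert g0 S := by
      ext g
      rw [hS'def, Finset.mem_symmDiff, Finset.mem_insert, Finset.mem_singleton]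
      constructor
      · rintro (⟨hgS, -⟩ | ⟨heq, -⟩)
        · exact Or.inr hgS
        · exact Or.inl heq
      · rintro (heq | hgS)
        · exact Or.inr ⟨heq, fun h => hg0S (heq ▸ h)⟩
        · exact Or.inl ⟨hgS, fun h => hg0S (h ▸ hgS)⟩
    have herase : S.erase g0 = S := Finset.erase_eq_of_notMem hg0S
    have hsum : (∑ g ∈ S, g) + g0 = ∑ g ∈ S', g := by
      rw [hS'eq, Finset.sum_insert hg0S, add_comm]
    have hne : (∑ g ∈ S, g) ≠ ∑ g ∈ S', g := by
      intro h
      have h2 : (∑ g ∈ S, g) + g0 = (∑ g ∈ S, g) + 0 := by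
        rw [add_zero, hsum, h]
      exact h0 ((add_left_cancel h2) ▸ hg0G)
    have hadj : (polytopeGraph (zonotope G)).Adj
        ⟨∑ g ∈ pat c G, g, vert_extreme hc⟩ ⟨∑ g ∈ pat c'' G, g, vert_extreme hc''⟩ := by
      constructor
      · intro hcon
        apply hne
        have := congrArg Subtype.val hcon
        simpa [hSdef, hpat''] using this
      · show IsExtreme ℝ (zonotope G) (segment ℝ (∑ g ∈ pat c G, g) (∑ g ∈ pat c'' G, g))
        rw [hpat'', ← hSdef, ← hsum, ← herase]
        exact hface
    refine ⟨SimpleGraph.Walk.cons hadj p, ?_⟩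
    rw [SimpleGraph.Walk.length_cons]
    omega

/-- The graph diameter of a zonotope generated by n pairwise non-collinear (nonzero)
line segments equals n. -/
theorem stmt_15 (d : ℕ) (G : Finset (Fin d → ℝ)) (h0 : (0 : Fin d → ℝ) ∉ G)
    (hnc : (G : Set (Fin d → ℝ)).Pairwise fun g g' => ∀ c : ℝ, g' ≠ c • g) :
    graphDiam (zonotope G) = G.card := by
  classical
  set n := G.card with hn
  -- Step C: upper bound for any pair of vertices, with explicit walk
  have stepC : ∀ u v : Set.extremePoints ℝ (zonotope G),
      ∃ p : (polytopeGraph (zonotope G)).Walk u v, p.length ≤ n := by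
    intro u v
    obtain ⟨cu, hcu, hurep⟩ := extreme_rep h0 u.2
    obtain ⟨cv, hcv, hvrep⟩ := extreme_rep h0 v.2
    -- perturb cv
    set U : Set (Fin d → ℝ) :=
      {c₂ | ∀ g ∈ G, if g ∈ pat cv G then 0 < g ⬝ᵥ c₂ else g ⬝ᵥ c₂ < 0} with hU
    have hUopen : IsOpen U := by
      have : U = ⋂ g ∈ (G : Set (Fin d → ℝ)),
          {c₂ | if g ∈ pat cv G then 0 < g ⬝ᵥ c₂ else g ⬝ᵥ c₂ < 0} := by
        ext c₂
        simp only [hU, Set.mem_setOf_eq, Set.mem_iInter, Finset.mem_coe]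
      rw [this]
      refine (G.finite_toSet).isOpen_biInter fun g _ => ?_
      by_cases hg : g ∈ pat cv G
      · simp only [hg, if_true]
        exact isOpen_lt continuous_const (continuous_dot g)
      · simp only [hg, if_false]
        exact isOpen_lt (continuous_dot g) continuous_const
    have hcvU : cv ∈ U := by
      intro g hg
      by_cases hgp : g ∈ pat cv G
      · simp only [hgp, if_true]
        rw [dotProduct_comm]
        exact (Finset.mem_filter.1 hgp).2
      · simp only [hgp, if_false]
        rw [dotProduct_comm]
        rcases lt_or_gt_of_ne (hcv g hg) with h | h
        · exact h
        · exact absurd (Finset.mem_filter.2 ⟨hg, h⟩) hgp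
    set W : Finset (Fin d → ℝ) :=
      ((G ×ˢ G).filter (fun p => p.1 ≠ p.2)).image
        (fun p => (cu ⬝ᵥ p.1) • p.2 - (cu ⬝ᵥ p.2) • p.1) with hW
    have hWne : ∀ w ∈ W, w ≠ 0 := by
      intro w hw
      obtain ⟨⟨g1, g2⟩, hmem, rfl⟩ := Finset.mem_image.1 hw
      obtain ⟨hprod, hne⟩ := Finset.mem_filter.1 hmem
      obtain ⟨hg1, hg2⟩ := Finset.mem_product.1 hprod
      simp only at hne ⊢
      intro hzero
      have h1 : (cu ⬝ᵥ g1) ≠ 0 := hcu g1 hg1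
      have h2 : (cu ⬝ᵥ g1) • g2 = (cu ⬝ᵥ g2) • g1 := sub_eq_zero.1 hzero
      have : g2 = ((cu ⬝ᵥ g2) / (cu ⬝ᵥ g1)) • g1 := by
        rw [div_eq_mul_inv, mul_comm, ← smul_smul, ← h2, inv_smul_smul₀ h1]
      exact hnc hg1 hg2 hne _ this
    obtain ⟨c₂, hc₂U, hc₂W⟩ := exists_generic W hWne hUopen hcvU
    have hc₂strict : ZStrict c₂ G := by
      intro g hg
      have h := hc₂U g hg
      rw [dotProduct_comm]
      by_cases hgp : g ∈ pat cv G
      · simp only [hgp, if_true] at h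
        exact ne_of_gt h
      · simp only [hgp, if_false] at h
        exact ne_of_lt h
    have hc₂pat : pat c₂ G = pat cv G := by
      ext g
      simp only [pat, Finset.mem_filter]
      constructor
      · rintro ⟨hg, hpos⟩
        refine ⟨hg, ?_⟩
        have := hc₂U g hg
        by_cases hgp : g ∈ pat cv G
        · exact (Finset.mem_filter.1 hgp).2
        · simp only [hgp, if_false] at this
          rw [dotProduct_comm] at this
          linarith
      · rintro ⟨hg, hpos⟩
        refine ⟨hg, ?_⟩
        have := hc₂U g hg
        have hgp : g ∈ pat cv G := Finset.mem_filter.2 ⟨hg, hpos⟩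
        simp only [hgp, if_true] at this
        rw [dotProduct_comm] at this
        exact this
    have hdet : ∀ g1 ∈ G, ∀ g2 ∈ G, g1 ≠ g2 →
        (cu ⬝ᵥ g1) * (c₂ ⬝ᵥ g2) ≠ (cu ⬝ᵥ g2) * (c₂ ⬝ᵥ g1) := by
      intro g1 hg1 g2 hg2 hne hcon
      have hwmem : (cu ⬝ᵥ g1) • g2 - (cu ⬝ᵥ g2) • g1 ∈ W :=
        Finset.mem_image.2 ⟨(g1, g2),
          Finset.mem_filter.2 ⟨Finset.mem_product.2 ⟨hg1, hg2⟩, hne⟩, rfl⟩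
      apply hc₂W _ hwmem
      rw [sub_dotProduct, smul_dotProduct, smul_dotProduct]
      rw [dotProduct_comm g2 c₂, dotProduct_comm g1 c₂]
      simp only [smul_eq_mul]
      rw [hcon]
      ring
    obtain ⟨p, hp⟩ := path_upper h0 (symmDiff (pat cu G) (pat c₂ G)).card
      cu c₂ hcu hc₂strict hdet rfl
    have hcardle : (symmDiff (pat cu G) (pat c₂ G)).card ≤ n := by
      apply Finset.card_le_card
      intro g hg
      rcases Finset.mem_symmDiff.1 hg with ⟨h, -⟩ | ⟨h, -⟩
      exacts [pat_subset h, pat_subset h]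
    have hueq : (⟨∑ g ∈ pat cu G, g, vert_extreme hcu⟩ :
        Set.extremePoints ℝ (zonotope G)) = u := by
      apply Subtype.ext; exact hurep.symm
    have hveq : (⟨∑ g ∈ pat c₂ G, g, vert_extreme hc₂strict⟩ :
        Set.extremePoints ℝ (zonotope G)) = v := by
      apply Subtype.ext
      simp only
      rw [hc₂pat]
      exact hvrep.symm
    exact ⟨p.copy hueq hveq, by rw [SimpleGraph.Walk.length_copy]; omega⟩
  -- Step A/B : generic functional and antipodal pair
  obtain ⟨c, -, hcgen⟩ := exists_generic G (fun g hg => fun h => h0 (h ▸ hg))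
    isOpen_univ (Set.mem_univ (0 : Fin d → ℝ))
  have hc : ZStrict c G := fun g hg => by
    rw [dotProduct_comm]; exact hcgen g hg
  have hcneg : ZStrict (-c) G := fun g hg => by
    rw [neg_dotProduct]
    exact neg_ne_zero.2 (hc g hg)
  have hsymmG : symmDiff (pat c G) (pat (-c) G) = G := by
    ext g
    rw [Finset.mem_symmDiff]
    simp only [pat, Finset.mem_filter]
    constructor
    · rintro (⟨⟨hg, -⟩, -⟩ | ⟨⟨hg, -⟩, -⟩) <;> exact hg
    · intro hg
      rcases lt_or_gt_of_ne (hc g hg) with h | h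
      · right
        refine ⟨⟨hg, ?_⟩, ?_⟩
        · rw [neg_dotProduct]; linarith
        · rintro ⟨-, hpos⟩; linarith
      · left
        refine ⟨⟨hg, h⟩, ?_⟩
        rintro ⟨-, hpos⟩
        rw [neg_dotProduct] at hpos; linarith
  set u0 : Set.extremePoints ℝ (zonotope G) := ⟨∑ g ∈ pat c G, g, vert_extreme hc⟩
  set v0 : Set.extremePoints ℝ (zonotope G) := ⟨∑ g ∈ pat (-c) G, g, vert_extreme hcneg⟩
  have hdist_ub : ∀ u v : Set.extremePoints ℝ (zonotope G),
      (polytopeGraph (zonotope G)).dist u v ≤ n := by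
    intro u v
    obtain ⟨p, hp⟩ := stepC u v
    exact le_trans (SimpleGraph.dist_le p) hp
  have hdist0 : (polytopeGraph (zonotope G)).dist u0 v0 = n := by
    have hub := hdist_ub u0 v0
    have hreach : (polytopeGraph (zonotope G)).Reachable u0 v0 := by
      obtain ⟨p, -⟩ := stepC u0 v0
      exact SimpleGraph.Walk.reachable p
    obtain ⟨p, hlen⟩ := hreach.exists_walk_length_eq_dist
    have hlow := walk_lower h0 hnc p (pat_subset (c := c)) (pat_subset (c := -c)) rfl rfl
    rw [hsymmG] at hlow
    rw [hlen] at hlow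
    omega
  -- compute the sSup
  have hmem : n ∈ {m | ∃ u v, (polytopeGraph (zonotope G)).dist u v = m} := ⟨u0, v0, hdist0⟩
  have hub : ∀ m ∈ {m | ∃ u v, (polytopeGraph (zonotope G)).dist u v = m}, m ≤ n := by
    rintro m ⟨u, v, rfl⟩
    exact hdist_ub u v
  rw [graphDiam]
  apply le_antisymm
  · exact csSup_le ⟨n, hmem⟩ hub
  · exact le_csSup ⟨n, hub⟩ hmem
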